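/- For every m ≥ 1, the coefficient matrices of the logarithm of the symmetric square of φ are given explicitly as follows. Let B_0 = [[θ,κ_1,κ_2],[0,θ,0],[0,0,θ]], B_1 = [[0,0,0],[κ_1,κ_2,0],[0,κ_1,0]], B_2 = κ_2·E_{31} ∈ Mat_3(K), so that (Sym²φ)_t = B_0 + B_1τ + B_2τ² is the symmetric square t-module of φ. Suppose (C_m)_{m≥0} is a sequence in Mat_3(K) with C_0 = I_3 and C_m = 0 for m < 0 satisfying the logarithm recursion B_0·C_m = C_m·B_0^{[m]} + C_{m-1}·B_1^{[m-1]} + C_{m-2}·B_2^{[m-2]} for all m ≥ 1 (so that Log_{Sym²φ}(z) = Σ_m C_m z^{[m]}). Then for every m ≥ 1, C_m = D′·𝐋_m·J, where D′ is the 3×4 matrix [[1,0,0,0],[0,1/2,1/2,0],[0,−κ_1/(2κ_2),−κ_1/(2κ_2),1]] and J is the 4×3 matrix [[1,0,0],[0,1,0],[0,1,0],[0,0,1]] (which repeats the second coordinate, corresponding to substituting (z_1,z_2,z_2,z_3)). -/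

import Mathlib

open Matrix
section Aux
variable {F : Type*} [Field F]
set_option maxHeartbeats 2000000

def EE (d k1 k2 K L1 L2 L1p L2p Lt0 Lt1 Lt2 : F) : Matrix (Fin 3) (Fin 3) F :=
  !![L1 + d*L1p, K*L1p + 2*k2*L2p, k2*L1p;
     d*Lt1/k2, Lt0 + 2*Lt2 + K*Lt1/k2, Lt1;
     d*L1/k2 - k1*d*Lt1/k2^2,
       2*L2 + K*L1/k2 - k1*Lt0/k2 - 2*k1*Lt2/k2 - k1*K*Lt1/k2^2,
       L1 - k1*Lt1/k2]

lemma DLJ (d k1 k2 K L1 L2 L1p L2p Lt0 Lt1 Lt2 : F) (h2 : (2:F) ≠ 0) (hk2 : k2 ≠ 0) :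
  !![(1:F),0,0,0; 0,1/2,1/2,0; 0,-(k1/(2*k2)),-(k1/(2*k2)),1] *
  !![L1 + d*L1p, k2*L2p, K*L1p + k2*L2p, k2*L1p;
     d*Lt1/k2, Lt0+Lt2, K*Lt1/k2+Lt2, Lt1;
     d*Lt1/k2, Lt2, Lt0+K*Lt1/k2+Lt2, Lt1;
     d*L1/k2, L2, K*L1/k2+L2, L1] *
  !![(1:F),0,0;0,1,0;0,1,0;0,0,1] = EE d k1 k2 K L1 L2 L1p L2p Lt0 Lt1 Lt2 := by
  have h2k2 : (2*k2 : F) ≠ 0 := mul_ne_zero h2 hk2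
  have hD : !![(1:F),0,0,0; 0,1/2,1/2,0; 0,-(k1/(2*k2)),-(k1/(2*k2)),1]
      = (2*k2:F)⁻¹ • !![2*k2,0,0,0; 0,k2,k2,0; 0,-k1,-k1,2*k2] := by
    ext i j
    fin_cases i <;> fin_cases j <;>
      simp [Matrix.smul_apply, Matrix.cons_val', Matrix.cons_val_zero,
        Matrix.cons_val_one, Matrix.head_cons, Matrix.empty_val', Matrix.cons_val_fin_one,
        Matrix.cons_val_two, Matrix.cons_val_three, Matrix.tail_cons, Matrix.of_apply,
        smul_eq_mul] <;> field_simp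
  rw [hD, Matrix.smul_mul, Matrix.smul_mul]
  ext i j
  fin_cases i <;> fin_cases j <;>
    simp [EE, Matrix.smul_apply, smul_eq_mul, Matrix.mul_apply, Fin.sum_univ_four,
      Fin.sum_univ_three, Matrix.cons_val', Matrix.cons_val_zero, Matrix.cons_val_one,
      Matrix.head_cons, Matrix.empty_val', Matrix.cons_val_fin_one,
      Matrix.cons_val_two, Matrix.cons_val_three, Matrix.tail_cons, Matrix.of_apply] <;>
    field_simp <;> ring

lemma sylvester_unique (th ta k1 k2 K : F) (hd : th - ta ≠ 0)
    (X Y R : Matrix (Fin 3) (Fin 3) F)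
    (hX : !![th,k1,k2;0,th,0;0,0,th] * X = X * !![ta,K,k2;0,ta,0;0,0,ta] + R)
    (hY : !![th,k1,k2;0,th,0;0,0,th] * Y = Y * !![ta,K,k2;0,ta,0;0,0,ta] + R) :
    X = Y := by
  have hZ : !![th,k1,k2;0,th,0;0,0,th] * (X - Y) = (X - Y) * !![ta,K,k2;0,ta,0;0,0,ta] := by
    rw [Matrix.mul_sub, Matrix.sub_mul, hX, hY]
    abel
  set Z := X - Y with hZdef
  have key : ∀ x : F, th * x - x * ta = 0 → x = 0 := by
    intro x hx
    have : (th - ta) * x = 0 := by linear_combination hx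
    rcases mul_eq_zero.mp this with h | h
    · exact absurd h hd
    · exact h
  have e00 := congrFun (congrFun hZ 0) 0
  have e01 := congrFun (congrFun hZ 0) 1
  have e02 := congrFun (congrFun hZ 0) 2
  have e10 := congrFun (congrFun hZ 1) 0
  have e11 := congrFun (congrFun hZ 1) 1
  have e12 := congrFun (congrFun hZ 1) 2
  have e20 := congrFun (congrFun hZ 2) 0
  have e21 := congrFun (congrFun hZ 2) 1
  have e22 := congrFun (congrFun hZ 2) 2
  simp [Matrix.mul_apply, Fin.sum_univ_three, Matrix.vecHead, Matrix.vecTail] at e00 e01 e02 e10 e11 e12 e20 e21 e22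
  have h10 : Z 1 0 = 0 := key _ (by linear_combination e10)
  have h20 : Z 2 0 = 0 := key _ (by linear_combination e20)
  have h00 : Z 0 0 = 0 := key _ (by linear_combination e00 - k1 * h10 - k2 * h20)
  have h11 : Z 1 1 = 0 := key _ (by linear_combination e11 + K * h10)
  have h21 : Z 2 1 = 0 := key _ (by linear_combination e21 + K * h20)
  have h12 : Z 1 2 = 0 := key _ (by linear_combination e12 + k2 * h10)
  have h22 : Z 2 2 = 0 := key _ (by linear_combination e22 + k2 * h20)
  have h01 : Z 0 1 = 0 := key _ (by linear_combination e01 - k1 * h11 - k2 * h21 + K * h00)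
  have h02 : Z 0 2 = 0 := key _ (by linear_combination e02 - k1 * h12 - k2 * h22 + k2 * h00)
  have : Z = 0 := by
    ext i j
    fin_cases i <;> fin_cases j <;> simp only [Matrix.zero_apply] <;> assumption
  have := sub_eq_zero.mp (hZdef ▸ this)
  exact this

lemma key_step3 (th d d1 d2 dq k1 k2 K K1 K2 b1 b2 b3 t1 t2 t3 p1 p2 p3 b0 t0 p0 : F)
    (hd : d ≠ 0) (hdq : dq ≠ 0) (hk2 : k2 ≠ 0)
    (hb0 : b0 = (K1*b1 + k2*b2)/d) (ht0 : t0 = (K1*t1 + k2*t2)/d)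
    (hp0 : p0 = (K1*p1 + k2*p2 - b0)/d) :
    !![th,k1,k2;0,th,0;0,0,th] *
      EE d k1 k2 K (b0^2) (b0*b1) (2*b0*p0) (p0*b1+b0*p1)
        (k2*(b0*t1-b1*t0)/dq) (k2*(b0*t0)/dq) (k2*(b1*t0)/dq)
    = EE d k1 k2 K (b0^2) (b0*b1) (2*b0*p0) (p0*b1+b0*p1)
        (k2*(b0*t1-b1*t0)/dq) (k2*(b0*t0)/dq) (k2*(b1*t0)/dq) * !![th-d,K,k2;0,th-d,0;0,0,th-d]
      + (EE d1 k1 k2 K1 (b1^2) (b1*b2) (2*b1*p1) (p1*b2+b1*p2)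
          (k2*(b1*t2-b2*t1)/dq) (k2*(b1*t1)/dq) (k2*(b2*t1)/dq) * !![0,0,0;K1,k2,0;0,K1,0]
        + EE d2 k1 k2 K2 (b2^2) (b2*b3) (2*b2*p2) (p2*b3+b2*p3)
          (k2*(b2*t3-b3*t2)/dq) (k2*(b2*t2)/dq) (k2*(b3*t2)/dq) * !![0,0,0;0,0,0;k2,0,0]) := by
  have hu : d * d⁻¹ = 1 := mul_inv_cancel₀ hd
  have hv : dq * dq⁻¹ = 1 := mul_inv_cancel₀ hdq
  have hw : k2 * k2⁻¹ = 1 := mul_inv_cancel₀ hk2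
  subst hp0 hb0 ht0
  ext i j
  fin_cases i <;> fin_cases j <;>
    simp [EE, Matrix.add_apply, Matrix.mul_apply, Fin.sum_univ_three,
      Matrix.vecHead, Matrix.vecTail, div_eq_mul_inv, ← inv_pow, -neg_add_rev]
  · linear_combination (2*K1^2*b1*p1 - K1^2*b1^2*d⁻¹ + 2*k2*K1*b2*p1 + 2*k2*K1*b1*p2 - 2*k2*K1*b1*b2*d⁻¹ + k2*K1^2*b1^2*d⁻¹*k2⁻¹ + 2*k2^2*b2*p2 - k2^2*b2^2*d⁻¹ + 2*k2^2*K1*b1*b2*d⁻¹*k2⁻¹ + k2^3*b2^2*d⁻¹*k2⁻¹ + k1*k2*K1^2*b1*t1*d⁻¹*dq⁻¹*k2⁻¹ + k1*k2^2*K1*b2*t1*d⁻¹*dq⁻¹*k2⁻¹ + k1*k2^2*K1*b1*t2*d⁻¹*dq⁻¹*k2⁻¹ - k1*k2^2*K1^2*b1*t1*d⁻¹*dq⁻¹*k2⁻¹^2 + k1*k2^3*b2*t2*d⁻¹*dq⁻¹*k2⁻¹ - k1*k2^3*K1*b2*t1*d⁻¹*dq⁻¹*k2⁻¹^2 - k1*k2^3*K1*b1*t2*d⁻¹*dq⁻¹*k2⁻¹^2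 - k1*k2^4*b2*t2*d⁻¹*dq⁻¹*k2⁻¹^2 + 2*d*K1^2*b1*p1*d⁻¹ - 2*d*K1^2*b1^2*d⁻¹^2 + 2*d*k2*K1*b2*p1*d⁻¹ + 2*d*k2*K1*b1*p2*d⁻¹ - 4*d*k2*K1*b1*b2*d⁻¹^2 + 2*d*k2^2*b2*p2*d⁻¹ - 2*d*k2^2*b2^2*d⁻¹^2) * hu + (0) * hv + (K1^2*b1^2*d⁻¹ + 2*k2*K1*b1*b2*d⁻¹ + k2^2*b2^2*d⁻¹ - k1*k2*K1^2*b1*t1*d⁻¹*dq⁻¹*k2⁻¹ - k1*k2^2*K1*b2*t1*d⁻¹*dq⁻¹*k2⁻¹ - k1*k2^2*K1*b1*t2*d⁻¹*dq⁻¹*k2⁻¹ - k1*k2^3*b2*t2*d⁻¹*dq⁻¹*k2⁻¹) * hw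
  · linear_combination (4*k2*K1*b1*p1 - 2*k2*K1*b1^2*d⁻¹ + 2*k2^2*b2*p1 + 2*k2^2*b1*p2 - 2*k2^2*b1*b2*d⁻¹) * hu + (0) * hv + (K*K1^2*b1^2*d⁻¹^2 + 2*k2*K*K1*b1*b2*d⁻¹^2 + k2^2*K*b2^2*d⁻¹^2 - 2*k1*k2*K1*b1*t1*d⁻¹*dq⁻¹ - k1*k2*K*K1^2*b1*t1*d⁻¹^2*dq⁻¹*k2⁻¹ - k1*k2^2*b2*t1*d⁻¹*dq⁻¹ - k1*k2^2*b1*t2*d⁻¹*dq⁻¹ - k1*k2^2*K*K1*b2*t1*d⁻¹^2*dq⁻¹*k2⁻¹ - k1*k2^2*K*K1*b1*t2*d⁻¹^2*dq⁻¹*k2⁻¹ - k1*k2^3*K*b2*t2*d⁻¹^2*dq⁻¹*k2⁻¹) * hw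
  · linear_combination (0) * hu + (0) * hv + (-k1*k2*K1^2*b1*t1*d⁻¹^2*dq⁻¹ - k1*k2^2*K1*b2*t1*d⁻¹^2*dq⁻¹ - k1*k2^2*K1*b1*t2*d⁻¹^2*dq⁻¹ - k1*k2^3*b2*t2*d⁻¹^2*dq⁻¹) * hw
  · linear_combination (k2*K1^2*b1*t1*dq⁻¹*k2⁻¹ + k2^2*K1*b2*t1*dq⁻¹*k2⁻¹ + k2^2*K1*b1*t2*dq⁻¹*k2⁻¹ + k2^3*b2*t2*dq⁻¹*k2⁻¹ + d*k2*K1^2*b1*t1*d⁻¹*dq⁻¹*k2⁻¹ + d*k2^2*K1*b2*t1*d⁻¹*dq⁻¹*k2⁻¹ + d*k2^2*K1*b1*t2*d⁻¹*dq⁻¹*k2⁻¹ + d*k2^3*b2*t2*d⁻¹*dq⁻¹*k2⁻¹) * hu + (0) * hv + (k2*K1*b2*t1*dq⁻¹ + k2*K1*b1*t2*dq⁻¹ + k2^2*b2*t2*dq⁻¹) * hw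
  · linear_combination (2*k2*K1*b1*t1*dq⁻¹ + k2^2*b2*t1*dq⁻¹ + k2^2*b1*t2*dq⁻¹) * hu + (0) * hv + (-k2*K1*b1*t1*dq⁻¹) * hw
  · linear_combination (k2*K1^2*b1*t1*d⁻¹*dq⁻¹ + k2^2*K1*b2*t1*d⁻¹*dq⁻¹ + k2^2*K1*b1*t2*d⁻¹*dq⁻¹ - k2^2*K1^2*b1*t1*d⁻¹*dq⁻¹*k2⁻¹ + k2^3*b2*t2*d⁻¹*dq⁻¹ - k2^3*K1*b2*t1*d⁻¹*dq⁻¹*k2⁻¹ - k2^3*K1*b1*t2*d⁻¹*dq⁻¹*k2⁻¹ - k2^4*b2*t2*d⁻¹*dq⁻¹*k2⁻¹) * hu + (0) * hv + (-k2*K1^2*b1*t1*d⁻¹*dq⁻¹ - k2^2*K1*b2*t1*d⁻¹*dq⁻¹ - k2^2*K1*b1*t2*d⁻¹*dq⁻¹ - k2^3*b2*t2*d⁻¹*dq⁻¹) * hw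
  · linear_combination (K1^2*b1^2*k2⁻¹ + 2*k2*K1*b1*b2*k2⁻¹ + k2^2*b2^2*k2⁻¹ - k1*k2*K1^2*b1*t1*dq⁻¹*k2⁻¹^2 - k1*k2^2*K1*b2*t1*dq⁻¹*k2⁻¹^2 - k1*k2^2*K1*b1*t2*dq⁻¹*k2⁻¹^2 - k1*k2^3*b2*t2*dq⁻¹*k2⁻¹^2 + d*K1^2*b1^2*d⁻¹*k2⁻¹ + 2*d*k2*K1*b1*b2*d⁻¹*k2⁻¹ + d*k2^2*b2^2*d⁻¹*k2⁻¹ - d*k1*k2*K1^2*b1*t1*d⁻¹*dq⁻¹*k2⁻¹^2 - d*k1*k2^2*K1*b2*t1*d⁻¹*dq⁻¹*k2⁻¹^2 - d*k1*k2^2*K1*b1*t2*d⁻¹*dq⁻¹*k2⁻¹^2 - d*k1*k2^3*b2*t2*d⁻¹*dq⁻¹*k2⁻¹^2) * hu + (0) * hv + (2*K1*b1*b2 + k2*b2^2 - k1*k2*K1*b2*t1*dq⁻¹*k2⁻¹ - k1*k2*K1*b1*t2*dq⁻¹*k2⁻¹ - k1*k2^2*b2*t2*dq⁻¹*k2⁻¹)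 * hw
  · linear_combination (2*K1*b1^2 + 2*k2*b1*b2 - 2*k1*k2*K1*b1*t1*dq⁻¹*k2⁻¹ - k1*k2^2*b2*t1*dq⁻¹*k2⁻¹ - k1*k2^2*b1*t2*dq⁻¹*k2⁻¹) * hu + (0) * hv + (-K1*b1^2 + k1*k2*K1*b1*t1*dq⁻¹*k2⁻¹) * hw
  · linear_combination (K1^2*b1^2*d⁻¹ + 2*k2*K1*b1*b2*d⁻¹ - k2*K1^2*b1^2*d⁻¹*k2⁻¹ + k2^2*b2^2*d⁻¹ - 2*k2^2*K1*b1*b2*d⁻¹*k2⁻¹ - k2^3*b2^2*d⁻¹*k2⁻¹ - k1*k2*K1^2*b1*t1*d⁻¹*dq⁻¹*k2⁻¹ - k1*k2^2*K1*b2*t1*d⁻¹*dq⁻¹*k2⁻¹ - k1*k2^2*K1*b1*t2*d⁻¹*dq⁻¹*k2⁻¹ + k1*k2^2*K1^2*b1*t1*d⁻¹*dq⁻¹*k2⁻¹^2 - k1*k2^3*b2*t2*d⁻¹*dq⁻¹*k2⁻¹ + k1*k2^3*K1*b2*t1*d⁻¹*dq⁻¹*k2⁻¹^2 + k1*k2^3*K1*b1*t2*d⁻¹*dq⁻¹*k2⁻¹^2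 + k1*k2^4*b2*t2*d⁻¹*dq⁻¹*k2⁻¹^2) * hu + (0) * hv + (-K1^2*b1^2*d⁻¹ - 2*k2*K1*b1*b2*d⁻¹ - k2^2*b2^2*d⁻¹ + k1*k2*K1^2*b1*t1*d⁻¹*dq⁻¹*k2⁻¹ + k1*k2^2*K1*b2*t1*d⁻¹*dq⁻¹*k2⁻¹ + k1*k2^2*K1*b1*t2*d⁻¹*dq⁻¹*k2⁻¹ + k1*k2^3*b2*t2*d⁻¹*dq⁻¹*k2⁻¹) * hw

lemma key_base1 (th dq k1 k2 K b0 p0 : F)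
    (hdq : dq ≠ 0) (hk2 : k2 ≠ 0)
    (hb0 : b0 = (k1*1 + k2*0)/dq) (hp0 : p0 = (k1*0 + k2*0 - b0)/dq) :
    !![th,k1,k2;0,th,0;0,0,th] *
      EE dq k1 k2 K (b0^2) (b0*1) (2*b0*p0) (p0*1+b0*0)
        (k2*(b0*0-1*1)/dq) (k2*(b0*1)/dq) (k2*(1*1)/dq)
    = EE dq k1 k2 K (b0^2) (b0*1) (2*b0*p0) (p0*1+b0*0)
        (k2*(b0*0-1*1)/dq) (k2*(b0*1)/dq) (k2*(1*1)/dq) * !![th-dq,K,k2;0,th-dq,0;0,0,th-dq]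
      + !![0,0,0;k1,k2,0;0,k1,0] := by
  have hv : dq * dq⁻¹ = 1 := mul_inv_cancel₀ hdq
  have hw : k2 * k2⁻¹ = 1 := mul_inv_cancel₀ hk2
  subst hp0 hb0
  ext i j
  fin_cases i <;> fin_cases j <;>
    simp [EE, Matrix.add_apply, Matrix.mul_apply, Fin.sum_univ_three,
      Matrix.vecHead, Matrix.vecTail, div_eq_mul_inv, ← inv_pow, -neg_add_rev]
  · linear_combination (-k1^2*dq⁻¹ + 2*k1^2*k2*dq⁻¹*k2⁻¹ - k1^2*k2^2*dq⁻¹*k2⁻¹^2 - 2*dq*k1^2*dq⁻¹^2) * hv + (k1^2*dq⁻¹ - k1^2*k2*dq⁻¹*k2⁻¹) * hw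
  · linear_combination (-2*k1*k2*dq⁻¹) * hv + (-k1*k2*dq⁻¹ + k1^2*K*dq⁻¹^2 - k1^2*k2*K*dq⁻¹^2*k2⁻¹) * hw
  · linear_combination (0) * hv + (-k1^2*k2*dq⁻¹^2) * hw
  · linear_combination (k1*k2*k2⁻¹ + dq*k1*k2*dq⁻¹*k2⁻¹) * hv + (k1) * hw
  · linear_combination (k2) * hv + (0) * hw
  · linear_combination (k1*k2*dq⁻¹ - k1*k2^2*dq⁻¹*k2⁻¹) * hv + (-k1*k2*dq⁻¹) * hw
  · linear_combination (k1^2*k2⁻¹ - k1^2*k2*k2⁻¹^2 + dq*k1^2*dq⁻¹*k2⁻¹ - dq*k1^2*k2*dq⁻¹*k2⁻¹^2) * hv + (-k1^2*k2⁻¹) * hw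
  · linear_combination (2*k1 - k1*k2*k2⁻¹) * hv + (-k1) * hw
  · linear_combination (k1^2*dq⁻¹ - 2*k1^2*k2*dq⁻¹*k2⁻¹ + k1^2*k2^2*dq⁻¹*k2⁻¹^2) * hv + (-k1^2*dq⁻¹ + k1^2*k2*dq⁻¹*k2⁻¹) * hw

lemma key_base2 (th d d1 dq k1 k2 K K1 b1 p1 b0 t0 p0 : F)
    (hd : d ≠ 0) (hdq : dq ≠ 0) (hk2 : k2 ≠ 0)
    (hb0 : b0 = (K1*b1 + k2*1)/d) (ht0 : t0 = (K1*1 + k2*0)/d)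
    (hp0 : p0 = (K1*p1 + k2*0 - b0)/d) :
    !![th,k1,k2;0,th,0;0,0,th] *
      EE d k1 k2 K (b0^2) (b0*b1) (2*b0*p0) (p0*b1+b0*p1)
        (k2*(b0*1-b1*t0)/dq) (k2*(b0*t0)/dq) (k2*(b1*t0)/dq)
    = EE d k1 k2 K (b0^2) (b0*b1) (2*b0*p0) (p0*b1+b0*p1)
        (k2*(b0*1-b1*t0)/dq) (k2*(b0*t0)/dq) (k2*(b1*t0)/dq) * !![th-d,K,k2;0,th-d,0;0,0,th-d]
      + (EE d1 k1 k2 K1 (b1^2) (b1*1) (2*b1*p1) (p1*1+b1*0)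
          (k2*(b1*0-1*1)/dq) (k2*(b1*1)/dq) (k2*(1*1)/dq) * !![0,0,0;K1,k2,0;0,K1,0]
        + !![0,0,0;0,0,0;k2,0,0]) := by
  have hu : d * d⁻¹ = 1 := mul_inv_cancel₀ hd
  have hv : dq * dq⁻¹ = 1 := mul_inv_cancel₀ hdq
  have hw : k2 * k2⁻¹ = 1 := mul_inv_cancel₀ hk2
  subst hp0 hb0 ht0
  ext i j
  fin_cases i <;> fin_cases j <;>
    simp [EE, Matrix.add_apply, Matrix.mul_apply, Fin.sum_univ_three,
      Matrix.vecHead, Matrix.vecTail, div_eq_mul_inv, ← inv_pow, -neg_add_rev]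
  · linear_combination (2*K1^2*b1*p1 - K1^2*b1^2*d⁻¹ + 2*k2*K1*p1 - 2*k2*K1*b1*d⁻¹ + k2*K1^2*b1^2*d⁻¹*k2⁻¹ - k2^2*d⁻¹ + 2*k2^2*K1*b1*d⁻¹*k2⁻¹ + k2^3*d⁻¹*k2⁻¹ + k1*k2*K1^2*b1*d⁻¹*dq⁻¹*k2⁻¹ + k1*k2^2*K1*d⁻¹*dq⁻¹*k2⁻¹ - k1*k2^2*K1^2*b1*d⁻¹*dq⁻¹*k2⁻¹^2 - k1*k2^3*K1*d⁻¹*dq⁻¹*k2⁻¹^2 + 2*d*K1^2*b1*p1*d⁻¹ - 2*d*K1^2*b1^2*d⁻¹^2 + 2*d*k2*K1*p1*d⁻¹ - 4*d*k2*K1*b1*d⁻¹^2 - 2*d*k2^2*d⁻¹^2) * hu + (0) * hv + (K1^2*b1^2*d⁻¹ + 2*k2*K1*b1*d⁻¹ + k2^2*d⁻¹ - k1*k2*K1^2*b1*d⁻¹*dq⁻¹*k2⁻¹ - k1*k2^2*K1*d⁻¹*dq⁻¹*k2⁻¹) * hw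
  · linear_combination (4*k2*K1*b1*p1 - 2*k2*K1*b1^2*d⁻¹ + 2*k2^2*p1 - 2*k2^2*b1*d⁻¹) * hu + (0) * hv + (K*K1^2*b1^2*d⁻¹^2 + 2*k2*K*K1*b1*d⁻¹^2 + k2^2*K*d⁻¹^2 - 2*k1*k2*K1*b1*d⁻¹*dq⁻¹ - k1*k2*K*K1^2*b1*d⁻¹^2*dq⁻¹*k2⁻¹ - k1*k2^2*d⁻¹*dq⁻¹ - k1*k2^2*K*K1*d⁻¹^2*dq⁻¹*k2⁻¹) * hw
  · linear_combination (0) * hu + (0) * hv + (-k1*k2*K1^2*b1*d⁻¹^2*dq⁻¹ - k1*k2^2*K1*d⁻¹^2*dq⁻¹) * hw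
  · linear_combination (k2*K1^2*b1*dq⁻¹*k2⁻¹ + k2^2*K1*dq⁻¹*k2⁻¹ + d*k2*K1^2*b1*d⁻¹*dq⁻¹*k2⁻¹ + d*k2^2*K1*d⁻¹*dq⁻¹*k2⁻¹) * hu + (0) * hv + (k2*K1*dq⁻¹) * hw
  · linear_combination (2*k2*K1*b1*dq⁻¹ + k2^2*dq⁻¹) * hu + (0) * hv + (-k2*K1*b1*dq⁻¹) * hw
  · linear_combination (k2*K1^2*b1*d⁻¹*dq⁻¹ + k2^2*K1*d⁻¹*dq⁻¹ - k2^2*K1^2*b1*d⁻¹*dq⁻¹*k2⁻¹ - k2^3*K1*d⁻¹*dq⁻¹*k2⁻¹) * hu + (0) * hv + (-k2*K1^2*b1*d⁻¹*dq⁻¹ - k2^2*K1*d⁻¹*dq⁻¹) * hw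
  · linear_combination (K1^2*b1^2*k2⁻¹ + 2*k2*K1*b1*k2⁻¹ + k2^2*k2⁻¹ - k1*k2*K1^2*b1*dq⁻¹*k2⁻¹^2 - k1*k2^2*K1*dq⁻¹*k2⁻¹^2 + d*K1^2*b1^2*d⁻¹*k2⁻¹ + 2*d*k2*K1*b1*d⁻¹*k2⁻¹ + d*k2^2*d⁻¹*k2⁻¹ - d*k1*k2*K1^2*b1*d⁻¹*dq⁻¹*k2⁻¹^2 - d*k1*k2^2*K1*d⁻¹*dq⁻¹*k2⁻¹^2) * hu + (0) * hv + (2*K1*b1 + k2 - k1*k2*K1*dq⁻¹*k2⁻¹) * hw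
  · linear_combination (2*K1*b1^2 + 2*k2*b1 - 2*k1*k2*K1*b1*dq⁻¹*k2⁻¹ - k1*k2^2*dq⁻¹*k2⁻¹) * hu + (0) * hv + (-K1*b1^2 + k1*k2*K1*b1*dq⁻¹*k2⁻¹) * hw
  · linear_combination (K1^2*b1^2*d⁻¹ + 2*k2*K1*b1*d⁻¹ - k2*K1^2*b1^2*d⁻¹*k2⁻¹ + k2^2*d⁻¹ - 2*k2^2*K1*b1*d⁻¹*k2⁻¹ - k2^3*d⁻¹*k2⁻¹ - k1*k2*K1^2*b1*d⁻¹*dq⁻¹*k2⁻¹ - k1*k2^2*K1*d⁻¹*dq⁻¹*k2⁻¹ + k1*k2^2*K1^2*b1*d⁻¹*dq⁻¹*k2⁻¹^2 + k1*k2^3*K1*d⁻¹*dq⁻¹*k2⁻¹^2) * hu + (0) * hv + (-K1^2*b1^2*d⁻¹ - 2*k2*K1*b1*d⁻¹ - k2^2*d⁻¹ + k1*k2*K1^2*b1*d⁻¹*dq⁻¹*k2⁻¹ + k1*k2^2*K1*d⁻¹*dq⁻¹*k2⁻¹) * hw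

lemma mapB0 {F : Type*} [Field F] (th k1 k2 : F) (e : ℕ) (he : e ≠ 0) (hk2 : k2 ^ e = k2) :
    (!![th,k1,k2;0,th,0;0,0,th]).map (· ^ e) = !![th^e, k1^e, k2; 0,th^e,0; 0,0,th^e] := by
  ext i j
  fin_cases i <;> fin_cases j <;>
    simp [Matrix.map_apply, Matrix.vecHead, Matrix.vecTail, zero_pow he, hk2]

lemma mapB1 {F : Type*} [Field F] (k1 k2 : F) (e : ℕ) (he : e ≠ 0) (hk2 : k2 ^ e = k2) :
    (!![0,0,0;k1,k2,0;0,k1,0]).map (· ^ e) = !![0,0,0;k1^e,k2,0;0,k1^e,0] := by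
  ext i j
  fin_cases i <;> fin_cases j <;>
    simp [Matrix.map_apply, Matrix.vecHead, Matrix.vecTail, zero_pow he, hk2]

lemma mapB2 {F : Type*} [Field F] (k2 : F) (e : ℕ) (he : e ≠ 0) (hk2 : k2 ^ e = k2) :
    (!![0,0,0;0,0,0;k2,0,0]).map (· ^ e) = !![0,0,0;0,0,0;k2,0,0] := by
  ext i j
  fin_cases i <;> fin_cases j <;>
    simp [Matrix.map_apply, Matrix.vecHead, Matrix.vecTail, zero_pow he, hk2]

end Aux

theorem logCoeff_symSquare_eq
    (p : ℕ) [Fact p.Prime] (hp : p ≠ 2)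
    (Fq : Type) [Field Fq] [Fintype Fq] [CharP Fq p]
    (q : ℕ) (hq : q = Fintype.card Fq)
    (κ₁ : Polynomial Fq) (κ₂ : Fqˣ)
    (θ k1 k2 : RatFunc Fq)
    (hθ : θ = RatFunc.X)
    (hk1 : k1 = algebraMap (Polynomial Fq) (RatFunc Fq) κ₁)
    (hk2 : k2 = algebraMap (Polynomial Fq) (RatFunc Fq) (Polynomial.C (κ₂ : Fq)))
    -- the logarithm coefficients β_m of φ
    (β : ℤ → RatFunc Fq)
    (hβneg : ∀ m : ℤ, m < 0 → β m = 0)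
    (hβ0 : β 0 = 1)
    (hβrec : ∀ m : ℤ, 1 ≤ m →
      β m = (k1 ^ q ^ (m - 1).toNat * β (m - 1) + k2 * β (m - 2)) /
        (θ - θ ^ q ^ m.toNat))
    -- the values β̃_m at t = θ of the once-twisted El-Guindy–Papanikolas functions
    (βt : ℤ → RatFunc Fq)
    (hβtneg : ∀ m : ℤ, m < 0 → βt m = 0)
    (hβt0 : βt 0 = 1)
    (hβtrec : ∀ m : ℤ, 1 ≤ m →
      βt m = (k1 ^ q ^ m.toNat * βt (m - 1) + k2 * βt (m - 2)) /
        (θ - θ ^ q ^ (m + 1).toNat))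
    -- the values β′_m at t = θ of the t-derivatives
    (β' : ℤ → RatFunc Fq)
    (hβ'nonpos : ∀ m : ℤ, m ≤ 0 → β' m = 0)
    (hβ'rec : ∀ m : ℤ, 1 ≤ m →
      β' m = (k1 ^ q ^ (m - 1).toNat * β' (m - 1) + k2 * β' (m - 2) - β m) /
        (θ - θ ^ q ^ m.toNat))
    -- the coefficients of the auxiliary logarithm series
    (L1 L2 L1' L2' Lt0 Lt1 Lt2 : ℤ → RatFunc Fq)
    (hL1 : ∀ m : ℤ, L1 m = β m ^ 2)
    (hL2 : ∀ m : ℤ, L2 m = β m * β (m - 1))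
    (hL1' : ∀ m : ℤ, L1' m = 2 * β m * β' m)
    (hL2' : ∀ m : ℤ, L2' m = β' m * β (m - 1) + β m * β' (m - 1))
    (hLt0 : ∀ m : ℤ, Lt0 m = k2 * (β m * βt (m - 2) - β (m - 1) * βt (m - 1)) / (θ - θ ^ q))
    (hLt1 : ∀ m : ℤ, Lt1 m = k2 * (β m * βt (m - 1)) / (θ - θ ^ q))
    (hLt2 : ∀ m : ℤ, Lt2 m = k2 * (β (m - 1) * βt (m - 1)) / (θ - θ ^ q))
    -- the matrix 𝐋_m
    (Lmat : ℤ → Matrix (Fin 4) (Fin 4) (RatFunc Fq))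
    (hLmat : ∀ m : ℤ, Lmat m =
      !![L1 m + (θ - θ ^ q ^ m.toNat) * L1' m, k2 * L2' m,
           k1 ^ q ^ m.toNat * L1' m + k2 * L2' m, k2 * L1' m;
         (θ - θ ^ q ^ m.toNat) * Lt1 m / k2, Lt0 m + Lt2 m,
           k1 ^ q ^ m.toNat * Lt1 m / k2 + Lt2 m, Lt1 m;
         (θ - θ ^ q ^ m.toNat) * Lt1 m / k2, Lt2 m,
           Lt0 m + k1 ^ q ^ m.toNat * Lt1 m / k2 + Lt2 m, Lt1 m;
         (θ - θ ^ q ^ m.toNat) * L1 m / k2, L2 m,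
           k1 ^ q ^ m.toNat * L1 m / k2 + L2 m, L1 m])
    -- the t-action of the symmetric square t-module (Sym²φ)_t = B₀ + B₁τ + B₂τ²
    (B0 B1 B2 : Matrix (Fin 3) (Fin 3) (RatFunc Fq))
    (hB0 : B0 = !![θ, k1, k2; 0, θ, 0; 0, 0, θ])
    (hB1 : B1 = !![0, 0, 0; k1, k2, 0; 0, k1, 0])
    (hB2 : B2 = !![0, 0, 0; 0, 0, 0; k2, 0, 0])
    -- the coefficient matrices of Log_{Sym²φ}
    (C : ℤ → Matrix (Fin 3) (Fin 3) (RatFunc Fq))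
    (hC0 : C 0 = 1)
    (hCneg : ∀ m : ℤ, m < 0 → C m = 0)
    (hCrec : ∀ m : ℤ, 1 ≤ m →
      B0 * C m = C m * B0.map (· ^ q ^ m.toNat)
        + C (m - 1) * B1.map (· ^ q ^ (m - 1).toNat)
        + C (m - 2) * B2.map (· ^ q ^ (m - 2).toNat))
    (D' : Matrix (Fin 3) (Fin 4) (RatFunc Fq))
    (hD' : D' = !![1, 0, 0, 0;
                   0, 1 / 2, 1 / 2, 0;
                   0, -(k1 / (2 * k2)), -(k1 / (2 * k2)), 1])
    (J : Matrix (Fin 4) (Fin 3) (RatFunc Fq))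
    (hJ : J = !![1, 0, 0; 0, 1, 0; 0, 1, 0; 0, 0, 1]) :
    ∀ m : ℤ, 1 ≤ m → C m = D' * Lmat m * J := by
  have hq1 : 1 < q := by rw [hq]; exact Fintype.one_lt_card
  have hq0 : q ≠ 0 := by omega
  have hqe : ∀ n : ℕ, q ^ n ≠ 0 := fun n => pow_ne_zero n hq0
  have hθne : ∀ n : ℕ, n ≠ 0 → θ - θ ^ q ^ n ≠ 0 := by
    intro n hn h
    rw [sub_eq_zero, hθ] at h
    have h' : algebraMap (Polynomial Fq) (RatFunc Fq) Polynomial.X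
        = algebraMap (Polynomial Fq) (RatFunc Fq) (Polynomial.X ^ q ^ n) := by
      rw [map_pow, RatFunc.algebraMap_X]; exact h
    have h'' := IsFractionRing.injective (Polynomial Fq) (RatFunc Fq) h'
    have hdeg := congrArg Polynomial.natDegree h''
    rw [Polynomial.natDegree_X, Polynomial.natDegree_X_pow] at hdeg
    have h2q : 2 ≤ q ^ n := by
      calc 2 ≤ q := hq1
      _ = q ^ 1 := (pow_one q).symm
      _ ≤ q ^ n := Nat.pow_le_pow_right (by omega) (by omega)
    omega
  have hdq : θ - θ ^ q ≠ 0 := by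
    have := hθne 1 one_ne_zero
    rwa [pow_one] at this
  have hk2ne : k2 ≠ 0 := by
    rw [hk2]
    intro h
    have h0 : Polynomial.C (κ₂ : Fq) = 0 :=
      IsFractionRing.injective (Polynomial Fq) (RatFunc Fq) (by rw [h, map_zero])
    exact κ₂.ne_zero (by simpa using h0)
  have h2ne : (2 : RatFunc Fq) ≠ 0 := by
    have h2Fq : (2 : Fq) ≠ 0 := by
      intro h
      have hd2 : (p : ℕ) ∣ 2 := by
        have : ((2 : ℕ) : Fq) = 0 := by exact_mod_cast h
        exact (CharP.cast_eq_zero_iff Fq p 2).mp this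
      have := (Nat.prime_dvd_prime_iff_eq (Fact.out : p.Prime) Nat.prime_two).mp hd2
      exact hp this
    intro h
    apply h2Fq
    have : algebraMap Fq (RatFunc Fq) (2 : Fq) = algebraMap Fq (RatFunc Fq) 0 := by
      rw [map_ofNat, map_zero, h]
    exact (algebraMap Fq (RatFunc Fq)).injective this
  have hfrob : ∀ n : ℕ, k2 ^ q ^ n = k2 := by
    intro n
    rw [hk2, ← map_pow, ← Polynomial.C_pow]
    have : (κ₂ : Fq) ^ q ^ n = (κ₂ : Fq) := by
      rw [hq]; exact FiniteField.pow_card_pow _ _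
    rw [this]
  have key : ∀ n : ℕ, C ((n : ℤ) + 1) = D' * Lmat ((n : ℤ) + 1) * J := by
    intro n
    induction n using Nat.strong_induction_on with
    | _ n IH =>
      match n, IH with
      | 0, _ =>
        rw [show ((0:ℕ):ℤ) + 1 = 1 from by norm_num]
        -- scalar recursions at m = 1
        have hb0 : β 1 = (k1 * 1 + k2 * 0) / (θ - θ ^ q) := by
          have h := hβrec 1 (by norm_num)
          rw [show (1:ℤ) - 1 = 0 from by norm_num, show (1:ℤ) - 2 = -1 from by norm_num,
            hβ0, hβneg (-1) (by norm_num)] at h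
          simpa using h
        have hp0 : β' 1 = (k1 * 0 + k2 * 0 - β 1) / (θ - θ ^ q) := by
          have h := hβ'rec 1 (by norm_num)
          rw [show (1:ℤ) - 1 = 0 from by norm_num, show (1:ℤ) - 2 = -1 from by norm_num,
            hβ'nonpos 0 (le_refl 0), hβ'nonpos (-1) (by norm_num)] at h
          simpa using h
        -- equation for C 1
        have U := hCrec 1 (by norm_num)
        rw [show (1:ℤ) - 1 = 0 from by norm_num, show (1:ℤ) - 2 = -1 from by norm_num,
          hC0, hCneg (-1) (by norm_num), hB0, hB1, hB2] at U
        rw [show ((1:ℤ)).toNat = 1 from rfl, show ((0:ℤ)).toNat = 0 from rfl,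
          show ((-1:ℤ)).toNat = 0 from rfl] at U
        rw [mapB0 θ k1 k2 (q ^ 1) (hqe 1) (hfrob 1),
          mapB1 k1 k2 (q ^ 0) (hqe 0) (hfrob 0),
          mapB2 k2 (q ^ 0) (hqe 0) (hfrob 0), one_mul, zero_mul, add_zero] at U
        simp only [pow_zero, pow_one] at U
        -- EE form of D' * Lmat 1 * J
        have hW : D' * Lmat 1 * J
            = EE (θ - θ ^ q) k1 k2 (k1 ^ q) ((β 1) ^ 2) (β 1 * 1) (2 * β 1 * β' 1)
                (β' 1 * 1 + β 1 * 0) (k2 * (β 1 * 0 - 1 * 1) / (θ - θ ^ q))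
                (k2 * (β 1 * 1) / (θ - θ ^ q)) (k2 * (1 * 1) / (θ - θ ^ q)) := by
          rw [hLmat 1, hD', hJ, hL1 1, hL2 1, hL1' 1, hL2' 1, hLt0 1, hLt1 1, hLt2 1]
          rw [show (1:ℤ) - 1 = 0 from by norm_num, show (1:ℤ) - 2 = -1 from by norm_num,
            hβ0, hβt0, hβtneg (-1) (by norm_num),
            hβ'nonpos 0 (le_refl 0), show ((1:ℤ)).toNat = 1 from rfl]
          simp only [pow_one]
          exact DLJ _ _ _ _ _ _ _ _ _ _ _ h2ne hk2ne
        rw [hW]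
        have hKS := key_base1 θ (θ - θ ^ q) k1 k2 (k1 ^ q) (β 1) (β' 1) hdq hk2ne hb0 hp0
        rw [show θ - (θ - θ ^ q) = θ ^ q from by ring] at hKS
        exact sylvester_unique θ (θ ^ q) k1 k2 (k1 ^ q) hdq _ _ _ U hKS
      | 1, IH =>
        have IH0 : C 1 = D' * Lmat 1 * J := by
          have h := IH 0 (by omega)
          rwa [show ((0:ℕ):ℤ) + 1 = 1 from by norm_num] at h
        rw [show ((1:ℕ):ℤ) + 1 = 2 from by norm_num]
        have hb0 : β 2 = (k1 ^ q * β 1 + k2 * 1) / (θ - θ ^ q ^ 2) := by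
          have h := hβrec 2 (by norm_num)
          rw [show (2:ℤ) - 1 = 1 from by norm_num, show (2:ℤ) - 2 = 0 from by norm_num,
            hβ0, show ((1:ℤ)).toNat = 1 from rfl, show ((2:ℤ)).toNat = 2 from rfl,
            show q ^ 1 = q from pow_one q] at h
          exact h
        have ht0 : βt 1 = (k1 ^ q * 1 + k2 * 0) / (θ - θ ^ q ^ 2) := by
          have h := hβtrec 1 (by norm_num)
          rw [show (1:ℤ) - 1 = 0 from by norm_num, show (1:ℤ) - 2 = -1 from by norm_num,
            hβt0, hβtneg (-1) (by norm_num), show (1:ℤ) + 1 = 2 from by norm_num,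
            show ((1:ℤ)).toNat = 1 from rfl, show ((2:ℤ)).toNat = 2 from rfl,
            show q ^ 1 = q from pow_one q] at h
          exact h
        have hp0 : β' 2 = (k1 ^ q * β' 1 + k2 * 0 - β 2) / (θ - θ ^ q ^ 2) := by
          have h := hβ'rec 2 (by norm_num)
          rw [show (2:ℤ) - 1 = 1 from by norm_num, show (2:ℤ) - 2 = 0 from by norm_num,
            hβ'nonpos 0 (le_refl 0), show ((1:ℤ)).toNat = 1 from rfl,
            show ((2:ℤ)).toNat = 2 from rfl, show q ^ 1 = q from pow_one q] at h
          exact h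
        have U := hCrec 2 (by norm_num)
        rw [show (2:ℤ) - 1 = 1 from by norm_num, show (2:ℤ) - 2 = 0 from by norm_num,
          hC0, hB0, hB1, hB2] at U
        rw [show ((2:ℤ)).toNat = 2 from rfl, show ((1:ℤ)).toNat = 1 from rfl,
          show ((0:ℤ)).toNat = 0 from rfl] at U
        rw [mapB0 θ k1 k2 (q ^ 2) (hqe 2) (hfrob 2),
          mapB1 k1 k2 (q ^ 1) (hqe 1) (hfrob 1),
          mapB2 k2 (q ^ 0) (hqe 0) (hfrob 0), one_mul,
          show q ^ 1 = q from pow_one q, add_assoc, IH0] at U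
        have hW1 : D' * Lmat 1 * J
            = EE (θ - θ ^ q) k1 k2 (k1 ^ q) ((β 1) ^ 2) (β 1 * 1) (2 * β 1 * β' 1)
                (β' 1 * 1 + β 1 * 0) (k2 * (β 1 * 0 - 1 * 1) / (θ - θ ^ q))
                (k2 * (β 1 * 1) / (θ - θ ^ q)) (k2 * (1 * 1) / (θ - θ ^ q)) := by
          rw [hLmat 1, hD', hJ, hL1 1, hL2 1, hL1' 1, hL2' 1, hLt0 1, hLt1 1, hLt2 1]
          rw [show (1:ℤ) - 1 = 0 from by norm_num, show (1:ℤ) - 2 = -1 from by norm_num,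
            hβ0, hβt0, hβtneg (-1) (by norm_num),
            hβ'nonpos 0 (le_refl 0), show ((1:ℤ)).toNat = 1 from rfl]
          simp only [pow_one]
          exact DLJ _ _ _ _ _ _ _ _ _ _ _ h2ne hk2ne
        have hW2 : D' * Lmat 2 * J
            = EE (θ - θ ^ q ^ 2) k1 k2 (k1 ^ q ^ 2) ((β 2) ^ 2) (β 2 * β 1) (2 * β 2 * β' 2)
                (β' 2 * β 1 + β 2 * β' 1) (k2 * (β 2 * 1 - β 1 * βt 1) / (θ - θ ^ q))
                (k2 * (β 2 * βt 1) / (θ - θ ^ q)) (k2 * (β 1 * βt 1) / (θ - θ ^ q)) := by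
          rw [hLmat 2, hD', hJ, hL1 2, hL2 2, hL1' 2, hL2' 2, hLt0 2, hLt1 2, hLt2 2]
          rw [show (2:ℤ) - 1 = 1 from by norm_num, show (2:ℤ) - 2 = 0 from by norm_num,
            hβt0, show ((2:ℤ)).toNat = 2 from rfl]
          exact DLJ _ _ _ _ _ _ _ _ _ _ _ h2ne hk2ne
        rw [hW1] at U
        rw [hW2]
        have hKS := key_base2 θ (θ - θ ^ q ^ 2) (θ - θ ^ q) (θ - θ ^ q) k1 k2
          (k1 ^ q ^ 2) (k1 ^ q) (β 1) (β' 1) (β 2) (βt 1) (β' 2)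
          (hθne 2 (by omega)) hdq hk2ne hb0 ht0 hp0
        rw [show θ - (θ - θ ^ q ^ 2) = θ ^ q ^ 2 from by ring] at hKS
        exact sylvester_unique θ (θ ^ q ^ 2) k1 k2 (k1 ^ q ^ 2) (hθne 2 (by omega)) _ _ _ U hKS
      | (k+2), IH =>
        have IH1 : C ((k:ℤ) + 2) = D' * Lmat ((k:ℤ) + 2) * J := by
          have h := IH (k+1) (by omega)
          rwa [show (((k+1:ℕ)):ℤ) + 1 = (k:ℤ) + 2 from by push_cast; ring] at h
        have IH0 : C ((k:ℤ) + 1) = D' * Lmat ((k:ℤ) + 1) * J := IH k (by omega)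
        rw [show ((k+2:ℕ):ℤ) + 1 = (k:ℤ) + 3 from by push_cast; ring]
        have hb0 : β ((k:ℤ)+3) = (k1 ^ q ^ (k+2) * β ((k:ℤ)+2) + k2 * β ((k:ℤ)+1))
            / (θ - θ ^ q ^ (k+3)) := by
          have h := hβrec ((k:ℤ)+3) (by omega)
          rw [show (k:ℤ)+3-1 = (k:ℤ)+2 from by ring, show (k:ℤ)+3-2 = (k:ℤ)+1 from by ring,
            show ((k:ℤ)+2).toNat = k+2 from by omega,
            show ((k:ℤ)+3).toNat = k+3 from by omega] at h
          exact h
        have ht0 : βt ((k:ℤ)+2) = (k1 ^ q ^ (k+2) * βt ((k:ℤ)+1) + k2 * βt (k:ℤ))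
            / (θ - θ ^ q ^ (k+3)) := by
          have h := hβtrec ((k:ℤ)+2) (by omega)
          rw [show (k:ℤ)+2-1 = (k:ℤ)+1 from by ring, show (k:ℤ)+2-2 = (k:ℤ) from by ring,
            show (k:ℤ)+2+1 = (k:ℤ)+3 from by ring,
            show ((k:ℤ)+2).toNat = k+2 from by omega,
            show ((k:ℤ)+3).toNat = k+3 from by omega] at h
          exact h
        have hp0 : β' ((k:ℤ)+3) = (k1 ^ q ^ (k+2) * β' ((k:ℤ)+2) + k2 * β' ((k:ℤ)+1)
            - β ((k:ℤ)+3)) / (θ - θ ^ q ^ (k+3)) := by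
          have h := hβ'rec ((k:ℤ)+3) (by omega)
          rw [show (k:ℤ)+3-1 = (k:ℤ)+2 from by ring, show (k:ℤ)+3-2 = (k:ℤ)+1 from by ring,
            show ((k:ℤ)+2).toNat = k+2 from by omega,
            show ((k:ℤ)+3).toNat = k+3 from by omega] at h
          exact h
        have U := hCrec ((k:ℤ)+3) (by omega)
        rw [show (k:ℤ)+3-1 = (k:ℤ)+2 from by ring, show (k:ℤ)+3-2 = (k:ℤ)+1 from by ring,
          hB0, hB1, hB2] at U
        rw [show ((k:ℤ)+3).toNat = k+3 from by omega,
          show ((k:ℤ)+2).toNat = k+2 from by omega,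
          show ((k:ℤ)+1).toNat = k+1 from by omega] at U
        rw [mapB0 θ k1 k2 (q ^ (k+3)) (hqe (k+3)) (hfrob (k+3)),
          mapB1 k1 k2 (q ^ (k+2)) (hqe (k+2)) (hfrob (k+2)),
          mapB2 k2 (q ^ (k+1)) (hqe (k+1)) (hfrob (k+1)), add_assoc, IH1, IH0] at U
        have hW3 : D' * Lmat ((k:ℤ)+3) * J
            = EE (θ - θ ^ q ^ (k+3)) k1 k2 (k1 ^ q ^ (k+3)) ((β ((k:ℤ)+3)) ^ 2)
                (β ((k:ℤ)+3) * β ((k:ℤ)+2)) (2 * β ((k:ℤ)+3) * β' ((k:ℤ)+3))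
                (β' ((k:ℤ)+3) * β ((k:ℤ)+2) + β ((k:ℤ)+3) * β' ((k:ℤ)+2))
                (k2 * (β ((k:ℤ)+3) * βt ((k:ℤ)+1) - β ((k:ℤ)+2) * βt ((k:ℤ)+2)) / (θ - θ ^ q))
                (k2 * (β ((k:ℤ)+3) * βt ((k:ℤ)+2)) / (θ - θ ^ q))
                (k2 * (β ((k:ℤ)+2) * βt ((k:ℤ)+2)) / (θ - θ ^ q)) := by
          rw [hLmat ((k:ℤ)+3), hD', hJ, hL1 ((k:ℤ)+3), hL2 ((k:ℤ)+3), hL1' ((k:ℤ)+3),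
            hL2' ((k:ℤ)+3), hLt0 ((k:ℤ)+3), hLt1 ((k:ℤ)+3), hLt2 ((k:ℤ)+3)]
          rw [show (k:ℤ)+3-1 = (k:ℤ)+2 from by ring, show (k:ℤ)+3-2 = (k:ℤ)+1 from by ring,
            show ((k:ℤ)+3).toNat = k+3 from by omega]
          exact DLJ _ _ _ _ _ _ _ _ _ _ _ h2ne hk2ne
        have hW2 : D' * Lmat ((k:ℤ)+2) * J
            = EE (θ - θ ^ q ^ (k+2)) k1 k2 (k1 ^ q ^ (k+2)) ((β ((k:ℤ)+2)) ^ 2)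
                (β ((k:ℤ)+2) * β ((k:ℤ)+1)) (2 * β ((k:ℤ)+2) * β' ((k:ℤ)+2))
                (β' ((k:ℤ)+2) * β ((k:ℤ)+1) + β ((k:ℤ)+2) * β' ((k:ℤ)+1))
                (k2 * (β ((k:ℤ)+2) * βt (k:ℤ) - β ((k:ℤ)+1) * βt ((k:ℤ)+1)) / (θ - θ ^ q))
                (k2 * (β ((k:ℤ)+2) * βt ((k:ℤ)+1)) / (θ - θ ^ q))
                (k2 * (β ((k:ℤ)+1) * βt ((k:ℤ)+1)) / (θ - θ ^ q)) := by
          rw [hLmat ((k:ℤ)+2), hD', hJ, hL1 ((k:ℤ)+2), hL2 ((k:ℤ)+2), hL1' ((k:ℤ)+2),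
            hL2' ((k:ℤ)+2), hLt0 ((k:ℤ)+2), hLt1 ((k:ℤ)+2), hLt2 ((k:ℤ)+2)]
          rw [show (k:ℤ)+2-1 = (k:ℤ)+1 from by ring, show (k:ℤ)+2-2 = (k:ℤ) from by ring,
            show ((k:ℤ)+2).toNat = k+2 from by omega]
          exact DLJ _ _ _ _ _ _ _ _ _ _ _ h2ne hk2ne
        have hW1 : D' * Lmat ((k:ℤ)+1) * J
            = EE (θ - θ ^ q ^ (k+1)) k1 k2 (k1 ^ q ^ (k+1)) ((β ((k:ℤ)+1)) ^ 2)
                (β ((k:ℤ)+1) * β (k:ℤ)) (2 * β ((k:ℤ)+1) * β' ((k:ℤ)+1))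
                (β' ((k:ℤ)+1) * β (k:ℤ) + β ((k:ℤ)+1) * β' (k:ℤ))
                (k2 * (β ((k:ℤ)+1) * βt ((k:ℤ)-1) - β (k:ℤ) * βt (k:ℤ)) / (θ - θ ^ q))
                (k2 * (β ((k:ℤ)+1) * βt (k:ℤ)) / (θ - θ ^ q))
                (k2 * (β (k:ℤ) * βt (k:ℤ)) / (θ - θ ^ q)) := by
          rw [hLmat ((k:ℤ)+1), hD', hJ, hL1 ((k:ℤ)+1), hL2 ((k:ℤ)+1), hL1' ((k:ℤ)+1),
            hL2' ((k:ℤ)+1), hLt0 ((k:ℤ)+1), hLt1 ((k:ℤ)+1), hLt2 ((k:ℤ)+1)]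
          rw [show (k:ℤ)+1-1 = (k:ℤ) from by ring, show (k:ℤ)+1-2 = (k:ℤ)-1 from by ring,
            show ((k:ℤ)+1).toNat = k+1 from by omega]
          exact DLJ _ _ _ _ _ _ _ _ _ _ _ h2ne hk2ne
        rw [hW2, hW1] at U
        rw [hW3]
        have hKS := key_step3 θ (θ - θ ^ q ^ (k+3)) (θ - θ ^ q ^ (k+2)) (θ - θ ^ q ^ (k+1))
          (θ - θ ^ q) k1 k2 (k1 ^ q ^ (k+3)) (k1 ^ q ^ (k+2)) (k1 ^ q ^ (k+1))
          (β ((k:ℤ)+2)) (β ((k:ℤ)+1)) (β (k:ℤ)) (βt ((k:ℤ)+1)) (βt (k:ℤ)) (βt ((k:ℤ)-1))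
          (β' ((k:ℤ)+2)) (β' ((k:ℤ)+1)) (β' (k:ℤ)) (β ((k:ℤ)+3)) (βt ((k:ℤ)+2)) (β' ((k:ℤ)+3))
          (hθne (k+3) (by omega)) hdq hk2ne hb0 ht0 hp0
        rw [show θ - (θ - θ ^ q ^ (k+3)) = θ ^ q ^ (k+3) from by ring] at hKS
        exact sylvester_unique θ (θ ^ q ^ (k+3)) k1 k2 (k1 ^ q ^ (k+3))
          (hθne (k+3) (by omega)) _ _ _ U hKS
  intro m hm
  obtain ⟨n, rfl⟩ : ∃ n : ℕ, m = (n : ℤ) + 1 := ⟨(m - 1).toNat, by omega⟩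
  exact key n
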